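/- Let a < 0 and α, β, γ > −1, and let n ≥ 1. If P is a monic polynomial of degree 2n satisfying ∫_a^0 P(x)(x−a)^{α}|x|^{β}(1−x)^{γ} x^k dx = 0 for k = 0,…,n−1 and ∫_0^1 P(x)(x−a)^{α} x^{β}(1−x)^{γ} x^k dx = 0 for k = 0,…,n−1, then the coefficient of x^{2n−1} in P equals A_{n,n} = − n [ α + β + 2n + a(β + γ + 2n) ] / (α + β + γ + 3n). -/

import Mathlib

open MeasureTheory Polynomial

namespace JA

noncomputable def pip (a : ℝ) : ℝ[X] := -X^3 + C (1+a) * X^2 - C a * X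

noncomputable def rp (a α β γ c : ℝ) : ℝ[X] :=
  C (-(α+β+γ+3*c)) * X^2 + C (α+β+2*c + a*(β+γ+2*c)) * X + C (-a*(β+c))

noncomputable def G (a α β γ : ℝ) (n : ℕ) : ℕ → ℝ[X]
  | 0 => 1
  | m+1 => rp a α β γ ((n - m : ℕ) : ℝ) * G a α β γ n m + pip a * (G a α β γ n m).derivative

noncomputable def lam (K : ℝ) : ℕ → ℝ
  | 0 => 1
  | m+1 => -(K - m) * lam K m

noncomputable def sig (K T : ℝ) : ℕ → ℝ
  | 0 => 0
  | m+1 => -(K - m - 1) * sig K T m + T * lam K m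

lemma eval_pip (a x : ℝ) : (pip a).eval x = (x - a) * x * (1 - x) := by
  simp [pip]; ring

lemma eval_rp (a α β γ c x : ℝ) :
    (rp a α β γ c).eval x = (α+c) * (x * (1-x)) + (β+c) * ((x-a)*(1-x)) - (γ+c) * ((x-a)*x) := by
  simp [rp]; ring

lemma natDegree_pip_le (a : ℝ) : (pip a).natDegree ≤ 3 := by
  unfold pip; compute_degree

lemma natDegree_rp_le (a α β γ c : ℝ) : (rp a α β γ c).natDegree ≤ 2 := by
  unfold rp; compute_degree

lemma natDegree_G_le (a α β γ : ℝ) (n : ℕ) : ∀ m, (G a α β γ n m).natDegree ≤ 2*m := by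
  intro m
  induction m with
  | zero => simp [G]
  | succ m ih =>
    rcases Nat.eq_zero_or_pos m with rfl | hm
    · simp only [G]
      refine le_trans (natDegree_add_le _ _) ?_
      simp only [G, derivative_one, mul_zero]
      refine max_le (le_trans (natDegree_mul_le) ?_) (by simp)
      have := natDegree_rp_le a α β γ ((n - 0 : ℕ) : ℝ)
      simpa using this
    · simp only [G]
      refine le_trans (natDegree_add_le _ _) (max_le ?_ ?_)
      · refine le_trans (natDegree_mul_le) ?_
        have h1 := natDegree_rp_le a α β γ ((n - m : ℕ) : ℝ)
        omega
      · refine le_trans (natDegree_mul_le) ?_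
        have h1 := natDegree_pip_le a
        have h2 : (G a α β γ n m).derivative.natDegree ≤ 2*m - 1 :=
          le_trans (natDegree_derivative_le _) (by omega)
        omega

lemma coeff_pip_mul (a : ℝ) (g : ℝ[X]) (d : ℕ) :
    (pip a * g).coeff (d+3) = -g.coeff d + (1+a) * g.coeff (d+1) - a * g.coeff (d+2) := by
  have h3 : (X^3 * g).coeff (d+3) = g.coeff d := coeff_X_pow_mul g 3 d
  have h2 : (X^2 * g).coeff ((d+1)+2) = g.coeff (d+1) := coeff_X_pow_mul g 2 (d+1)
  have h1 : (X^1 * g).coeff ((d+2)+1) = g.coeff (d+2) := coeff_X_pow_mul g 1 (d+2)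
  have e2 : (d+1)+2 = d+3 := by omega
  have e1 : (d+2)+1 = d+3 := by omega
  rw [e2] at h2; rw [e1] at h1
  calc (pip a * g).coeff (d+3)
      = (-(X^3 * g) + C (1+a) * (X^2 * g) - C a * (X^1 * g)).coeff (d+3) := by
        rw [pip]; ring_nf
    _ = -g.coeff d + (1+a) * g.coeff (d+1) - a * g.coeff (d+2) := by
        rw [coeff_sub, coeff_add, coeff_neg, coeff_C_mul, coeff_C_mul, h3, h2, h1]

lemma coeff_rp_mul (a α β γ c : ℝ) (f : ℝ[X]) (d : ℕ) :
    (rp a α β γ c * f).coeff (d+2) = -(α+β+γ+3*c) * f.coeff d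
      + (α+β+2*c + a*(β+γ+2*c)) * f.coeff (d+1) + (-a*(β+c)) * f.coeff (d+2) := by
  have h2 : (X^2 * f).coeff (d+2) = f.coeff d := coeff_X_pow_mul f 2 d
  have h1 : (X^1 * f).coeff ((d+1)+1) = f.coeff (d+1) := coeff_X_pow_mul f 1 (d+1)
  have e1 : (d+1)+1 = d+2 := by omega
  rw [e1] at h1
  calc (rp a α β γ c * f).coeff (d+2)
      = (C (-(α+β+γ+3*c)) * (X^2 * f) + C (α+β+2*c + a*(β+γ+2*c)) * (X^1 * f)
          + C (-a*(β+c)) * f).coeff (d+2) := by rw [rp]; ring_nf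
    _ = _ := by
        rw [coeff_add, coeff_add, coeff_C_mul, coeff_C_mul, coeff_C_mul, h2, h1]

lemma cast_two_m_sub_one {m : ℕ} (hm : 1 ≤ m) : ((2*m-1 : ℕ) : ℝ) = 2*(m:ℝ)-1 := by
  have h : 1 ≤ 2*m := by omega
  push_cast [Nat.cast_sub h]
  ring

lemma coeff_step_top (a α β γ c : ℝ) (f : ℝ[X]) (m : ℕ) (hm : 1 ≤ m) (hdeg : f.natDegree ≤ 2*m) :
    (rp a α β γ c * f + pip a * f.derivative).coeff (2*m+2)
      = -(α+β+γ+3*c+2*m) * f.coeff (2*m) := by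
  have hz1 : f.coeff (2*m+1) = 0 := coeff_eq_zero_of_natDegree_lt (by omega)
  have hz2 : f.coeff (2*m+2) = 0 := coeff_eq_zero_of_natDegree_lt (by omega)
  have e1 : 2*m+2 = (2*m)+2 := by omega
  have e2 : 2*m+2 = (2*m-1)+3 := by omega
  rw [coeff_add, e1, coeff_rp_mul, ← e1, e2, coeff_pip_mul, ← e2]
  have d1 : f.derivative.coeff (2*m-1) = (2*(m:ℝ)) * f.coeff (2*m) := by
    rw [coeff_derivative, show (2*m-1)+1 = 2*m from by omega, cast_two_m_sub_one hm]
    ring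
  have d2 : f.derivative.coeff (2*m) = 0 := by
    rw [coeff_derivative, hz1]; ring
  have d3 : f.derivative.coeff (2*m+1) = 0 := by
    rw [coeff_derivative, hz2]; ring
  simp only [show 2*m-1+1 = 2*m from by omega, show 2*m-1+2 = 2*m+1 from by omega,
    d1, d2, d3, hz1, hz2]
  push_cast
  ring

lemma coeff_step_sub (a α β γ c : ℝ) (f : ℝ[X]) (m : ℕ) (hm : 1 ≤ m) (hdeg : f.natDegree ≤ 2*m) :
    (rp a α β γ c * f + pip a * f.derivative).coeff (2*m+1)
      = -(α+β+γ+3*c+2*m-1) * f.coeff (2*m-1)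
        + (α+β+2*c + a*(β+γ+2*c) + 2*m*(1+a)) * f.coeff (2*m) := by
  have hz1 : f.coeff (2*m+1) = 0 := coeff_eq_zero_of_natDegree_lt (by omega)
  have e1 : 2*m+1 = (2*m-1)+2 := by omega
  have e2 : 2*m+1 = (2*m-2)+3 := by omega
  rw [coeff_add, e1, coeff_rp_mul, ← e1, e2, coeff_pip_mul, ← e2]
  have d0 : f.derivative.coeff (2*m-2) = (2*(m:ℝ)-1) * f.coeff (2*m-1) := by
    rw [coeff_derivative, show (2*m-2)+1 = 2*m-1 from by omega,
      show ((2*m-2 : ℕ):ℝ) = 2*(m:ℝ)-2 from by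
        push_cast [Nat.cast_sub (show 2 ≤ 2*m by omega)]; ring]
    ring
  have d1 : f.derivative.coeff (2*m-1) = (2*(m:ℝ)) * f.coeff (2*m) := by
    rw [coeff_derivative, show (2*m-1)+1 = 2*m from by omega, cast_two_m_sub_one hm]; ring
  have d2 : f.derivative.coeff (2*m) = 0 := by
    rw [coeff_derivative, hz1]; ring
  simp only [show 2*m-1+1 = 2*m from by omega, show 2*m-1+2 = 2*m+1 from by omega,
    show 2*m-2+1 = 2*m-1 from by omega, show 2*m-2+2 = 2*m from by omega,
    d0, d1, d2, hz1]
  push_cast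
  ring

lemma lam_ne_zero (K : ℝ) (n : ℕ) (hK : ∀ m < n, K - m ≠ 0) : lam K n ≠ 0 := by
  induction n with
  | zero => simp [lam]
  | succ m ih =>
    have h1 : K - m ≠ 0 := hK m (by omega)
    have h2 : lam K m ≠ 0 := ih (fun j hj => hK j (by omega))
    simp only [lam]
    exact mul_ne_zero (neg_ne_zero.mpr h1) h2

lemma sig_eq (K T : ℝ) (hK : K ≠ 0) : ∀ m : ℕ, sig K T m = -(m:ℝ) * T / K * lam K m := by
  intro m
  induction m with
  | zero => simp [sig]
  | succ m ih =>
    simp only [sig, lam, ih]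
    push_cast
    field_simp
    ring

lemma G_one (a α β γ : ℝ) (n : ℕ) : G a α β γ n 1 = rp a α β γ (n : ℝ) := by
  simp [G, rp]

lemma coeff_rp (a α β γ c : ℝ) :
    (rp a α β γ c).coeff 2 = -(α+β+γ+3*c) ∧ (rp a α β γ c).coeff 1 = α+β+2*c + a*(β+γ+2*c) := by
  unfold rp
  constructor <;>
    (simp only [coeff_add, coeff_C_mul, coeff_X_pow, coeff_X_one, coeff_C, coeff_X]; norm_num)

lemma G_coeff_invariant (a α β γ : ℝ) (n : ℕ) :
    ∀ m, 1 ≤ m → m ≤ n →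
      (G a α β γ n m).coeff (2*m) = lam (α+β+γ+3*n) m ∧
      (G a α β γ n m).coeff (2*m-1) = sig (α+β+γ+3*n) (α+β+2*n + a*(β+γ+2*n)) m := by
  set K := α+β+γ+3*(n:ℝ) with hK
  set T := α+β+2*(n:ℝ) + a*(β+γ+2*(n:ℝ)) with hT
  intro m
  induction m with
  | zero => omega
  | succ m ih =>
    intro _ hmn
    rcases Nat.eq_zero_or_pos m with rfl | hm
    · rw [show 2*(0+1) = 2 from rfl, show 2*(0+1)-1 = 1 from rfl, G_one]
      have h := coeff_rp a α β γ (n:ℝ)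
      simp only [lam, sig, Nat.cast_zero, h.1, h.2]
      constructor <;> ring
    · obtain ⟨ht, hs⟩ := ih (by omega) (by omega)
      have hdeg := natDegree_G_le a α β γ n m
      have hcast : ((n - m : ℕ) : ℝ) = (n:ℝ) - m := by
        rw [Nat.cast_sub (by omega)]
      have e1 : 2*(m+1) = 2*m+2 := by omega
      have e2 : 2*(m+1)-1 = 2*m+1 := by omega
      rw [e2, e1]
      simp only [G]
      rw [coeff_step_top a α β γ _ _ m hm hdeg, coeff_step_sub a α β γ _ _ m hm hdeg,
        ht, hs, hcast]
      constructor
      · show _ = lam K (m+1)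
        simp only [lam]
        push_cast
        ring
      · show _ = sig K T (m+1)
        simp only [sig]
        push_cast
        ring

lemma ortho_induction (a α β γ : ℝ) (n : ℕ) (L : ℝ[X] → ℝ)
    (hadd : ∀ p q : ℝ[X], L (p + q) = L p + L q)
    (hsmul : ∀ (r : ℝ) (p : ℝ[X]), L (C r * p) = r * L p)
    (hPear : ∀ c : ℕ, 1 ≤ c →
      ∀ f : ℝ[X], L ((pip a)^(c-1) * (rp a α β γ (c:ℝ) * f + pip a * f.derivative)) = 0) :
    ∀ m, m ≤ n → ∀ k, k < m → L ((pip a)^(n-m) * (X^k * G a α β γ n m)) = 0 := by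
  have hzero : L 0 = 0 := by
    have := hsmul 0 0
    simpa using this
  have hsub : ∀ p q : ℝ[X], L (p - q) = L p - L q := by
    intro p q
    have h1 : L (q + (p - q)) = L q + L (p - q) := hadd q (p - q)
    rw [add_sub_cancel] at h1
    linarith
  intro m
  induction m with
  | zero => intro _ k hk; omega
  | succ m ih =>
    intro hmn k hk
    have hc1 : 1 ≤ n - m := by omega
    -- key polynomial identity
    have hkey : ∀ f : ℝ[X],
        (pip a)^(n-(m+1)) * (X^k * G a α β γ n (m+1))
          = (pip a)^(n-m-1) * (rp a α β γ ((n-m : ℕ):ℝ) * (X^k * G a α β γ n m)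
              + pip a * (X^k * G a α β γ n m).derivative)
            - C (k:ℝ) * ((pip a)^(n-m) * (X^(k-1) * G a α β γ n m)) := by
      intro f
      have hd : (X^k * G a α β γ n m).derivative
          = C (k:ℝ) * X^(k-1) * G a α β γ n m + X^k * (G a α β γ n m).derivative := by
        rw [derivative_mul, derivative_X_pow]
      have hpow : (pip a)^(n-m) = (pip a)^(n-m-1) * pip a := by
        rw [← pow_succ]
        congr 1
        omega
      rw [hd, show n-(m+1) = n-m-1 from by omega]
      simp only [G]
      rw [hpow]
      ring
    rw [hkey 0, hsub]
    have h1 : L ((pip a)^(n-m-1) * (rp a α β γ ((n-m : ℕ):ℝ) * (X^k * G a α β γ n m)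
        + pip a * (X^k * G a α β γ n m).derivative)) = 0 := by
      have := hPear (n-m) hc1 (X^k * G a α β γ n m)
      simpa using this
    have h2 : L (C (k:ℝ) * ((pip a)^(n-m) * (X^(k-1) * G a α β γ n m))) = 0 := by
      rcases Nat.eq_zero_or_pos k with rfl | hkpos
      · simp only [Nat.cast_zero, map_zero, zero_mul]
        exact hzero
      · rw [hsmul]
        rw [ih (by omega) (k-1) (by omega)]
        ring
    rw [h1, h2]
    ring

lemma integrableOn_of_bound {s : Set ℝ} (hs : MeasurableSet s) {f bound : ℝ → ℝ}
    (hmeas : AEStronglyMeasurable f (volume.restrict s))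
    (hbint : IntegrableOn bound s volume)
    (hb : ∀ x ∈ s, ‖f x‖ ≤ bound x) : IntegrableOn f s volume :=
  hbint.mono' hmeas ((ae_restrict_iff' hs).2 (Filter.Eventually.of_forall hb))

lemma contOn_weight (α β γ a : ℝ) {s : Set ℝ} (g : ℝ[X])
    (h1 : ∀ x ∈ s, x - a ≠ 0) (h2 : ∀ x ∈ s, x ≠ 0) (h3 : ∀ x ∈ s, 1 - x ≠ 0) :
    ContinuousOn (fun x => (x - a) ^ α * |x| ^ β * (1 - x) ^ γ * g.eval x) s := by
  refine ContinuousOn.mul (ContinuousOn.mul (ContinuousOn.mul ?_ ?_) ?_)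
    (Polynomial.continuous g).continuousOn
  · exact ((continuous_id.sub continuous_const).continuousOn).rpow_const
      (fun x hx => Or.inl (h1 x hx))
  · exact (continuous_abs.continuousOn).rpow_const
      (fun x hx => Or.inl (by simpa using h2 x hx))
  · exact ((continuous_const.sub continuous_id).continuousOn).rpow_const
      (fun x hx => Or.inl (h3 x hx))

lemma contOn_weight2 (α β γ a : ℝ) {s : Set ℝ} (g : ℝ[X])
    (h1 : ∀ x ∈ s, x - a ≠ 0) (h2 : ∀ x ∈ s, x ≠ 0) (h3 : ∀ x ∈ s, 1 - x ≠ 0) :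
    ContinuousOn (fun x => (x - a) ^ α * x ^ β * (1 - x) ^ γ * g.eval x) s := by
  refine ContinuousOn.mul (ContinuousOn.mul (ContinuousOn.mul ?_ ?_) ?_)
    (Polynomial.continuous g).continuousOn
  · exact ((continuous_id.sub continuous_const).continuousOn).rpow_const
      (fun x hx => Or.inl (h1 x hx))
  · exact (continuous_id.continuousOn).rpow_const (fun x hx => Or.inl (h2 x hx))
  · exact ((continuous_const.sub continuous_id).continuousOn).rpow_const
      (fun x hx => Or.inl (h3 x hx))

lemma integrableOn_left {a α β γ : ℝ} (ha : a < 0) (hα : -1 < α) (hβ : -1 < β)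
    (g : ℝ[X]) :
    IntegrableOn (fun x => (x - a) ^ α * |x| ^ β * (1 - x) ^ γ * g.eval x)
      (Set.Ioo a 0) volume := by
  set f : ℝ → ℝ := fun x => (x - a) ^ α * |x| ^ β * (1 - x) ^ γ * g.eval x with hf
  have hm2 : a/2 < 0 := by linarith
  have ham : a < a/2 := by linarith
  have hconts : ContinuousOn f (Set.Ioo a 0) := by
    apply contOn_weight
    · intro x hx; have := hx.1; intro h; rw [sub_eq_zero] at h; subst h; exact lt_irrefl _ this
    · intro x hx; exact ne_of_lt hx.2
    · intro x hx; have := hx.2; intro h; nlinarith [sub_eq_zero.mp h]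
  have hsub1 : Set.Ioc a (a/2) ⊆ Set.Ioo a 0 := fun x hx => ⟨hx.1, lt_of_le_of_lt hx.2 hm2⟩
  have hsub2 : Set.Ico (a/2) 0 ⊆ Set.Ioo a 0 := fun x hx => ⟨lt_of_lt_of_le ham hx.1, hx.2⟩
  have piece1 : IntegrableOn f (Set.Ioc a (a/2)) volume := by
    obtain ⟨C, hC⟩ := (isCompact_Icc (a := a) (b := a/2)).exists_bound_of_continuousOn
      (f := fun x => |x| ^ β * (1 - x) ^ γ * g.eval x)
      (by
        refine ContinuousOn.mul (ContinuousOn.mul ?_ ?_) (Polynomial.continuous g).continuousOn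
        · refine (continuous_abs.continuousOn).rpow_const (fun x hx => Or.inl ?_)
          have : x ≤ a/2 := hx.2
          simp only [ne_eq, abs_eq_zero]
          intro h; subst h; linarith
        · refine ((continuous_const.sub continuous_id).continuousOn).rpow_const
            (fun x hx => Or.inl ?_)
          intro h; simp only [Pi.sub_apply, id_eq, sub_eq_zero] at h
          have := hx.2; linarith)
    apply integrableOn_of_bound measurableSet_Ioc
      ((hconts.mono hsub1).aestronglyMeasurable measurableSet_Ioc)
      (bound := fun x => (x - a) ^ α * C)
    · have h1 : IntervalIntegrable (fun x : ℝ => x ^ α) volume 0 (a/2 - a) :=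
        intervalIntegral.intervalIntegrable_rpow' hα
      have h2 : IntervalIntegrable (fun x : ℝ => (x - a) ^ α) volume a (a/2) := by
        have := h1.comp_sub_right a
        simpa using this
      exact (intervalIntegrable_iff_integrableOn_Ioc_of_le (le_of_lt ham)).mp (h2.mul_const C)
    · intro x hx
      have hxa : (0:ℝ) ≤ x - a := by have := hx.1; linarith
      have hxI : x ∈ Set.Icc a (a/2) := ⟨le_of_lt hx.1, hx.2⟩
      have hfx : f x = (x - a) ^ α * (|x| ^ β * (1 - x) ^ γ * g.eval x) := by rw [hf]; ring
      rw [hfx, norm_mul, Real.norm_eq_abs (((x - a)) ^ α),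
        abs_of_nonneg (Real.rpow_nonneg hxa α)]
      exact mul_le_mul_of_nonneg_left (hC x hxI) (Real.rpow_nonneg hxa α)
  have piece2 : IntegrableOn f (Set.Ico (a/2) 0) volume := by
    obtain ⟨C, hC⟩ := (isCompact_Icc (a := a/2) (b := 0)).exists_bound_of_continuousOn
      (f := fun x => (x - a) ^ α * (1 - x) ^ γ * g.eval x)
      (by
        refine ContinuousOn.mul (ContinuousOn.mul ?_ ?_) (Polynomial.continuous g).continuousOn
        · refine ((continuous_id.sub continuous_const).continuousOn).rpow_const
            (fun x hx => Or.inl ?_)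
          intro h; simp only [Pi.sub_apply, id_eq, sub_eq_zero] at h
          have := hx.1; linarith
        · refine ((continuous_const.sub continuous_id).continuousOn).rpow_const
            (fun x hx => Or.inl ?_)
          intro h; simp only [Pi.sub_apply, id_eq, sub_eq_zero] at h
          have := hx.2; linarith)
    apply integrableOn_of_bound measurableSet_Ico
      ((hconts.mono hsub2).aestronglyMeasurable measurableSet_Ico)
      (bound := fun x => (0 - x) ^ β * C)
    · have h1 : IntervalIntegrable (fun x : ℝ => x ^ β) volume (-(a/2)) 0 :=
        intervalIntegral.intervalIntegrable_rpow' hβ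
      have h2 : IntervalIntegrable (fun x : ℝ => (0 - x) ^ β) volume (a/2) 0 := by
        have := h1.comp_sub_left 0
        simpa using this
      have h3 := (intervalIntegrable_iff_integrableOn_Icc_of_le (le_of_lt hm2)).mp
        (h2.mul_const C)
      exact h3.mono_set Set.Ico_subset_Icc_self
    · intro x hx
      have hx0 : x < 0 := hx.2
      have habs : |x| = 0 - x := by rw [abs_of_neg hx0]; ring
      have hxI : x ∈ Set.Icc (a/2) 0 := ⟨hx.1, le_of_lt hx.2⟩
      have hnn : (0:ℝ) ≤ |x| ^ β := Real.rpow_nonneg (abs_nonneg x) β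
      have hfx : f x = |x| ^ β * ((x - a) ^ α * (1 - x) ^ γ * g.eval x) := by rw [hf]; ring
      rw [hfx, norm_mul, Real.norm_eq_abs (|x| ^ β), abs_of_nonneg hnn, ← habs]
      exact mul_le_mul_of_nonneg_left (hC x hxI) hnn
  have hcover : Set.Ioo a 0 ⊆ Set.Ioc a (a/2) ∪ Set.Ico (a/2) 0 := by
    intro x hx
    rcases le_or_gt x (a/2) with h | h
    · exact Or.inl ⟨hx.1, h⟩
    · exact Or.inr ⟨le_of_lt h, hx.2⟩
  exact (piece1.union piece2).mono_set hcover

lemma integrableOn_right {a α β γ : ℝ} (ha : a < 0) (hβ : -1 < β) (hγ : -1 < γ)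
    (g : ℝ[X]) :
    IntegrableOn (fun x => (x - a) ^ α * x ^ β * (1 - x) ^ γ * g.eval x)
      (Set.Ioo (0:ℝ) 1) volume := by
  set f : ℝ → ℝ := fun x => (x - a) ^ α * x ^ β * (1 - x) ^ γ * g.eval x with hf
  have hconts : ContinuousOn f (Set.Ioo (0:ℝ) 1) := by
    apply contOn_weight2
    · intro x hx; have := hx.1; intro h; rw [sub_eq_zero] at h; subst h; linarith
    · intro x hx; exact ne_of_gt hx.1
    · intro x hx; have := hx.2; intro h; rw [sub_eq_zero] at h; linarith
  have hsub1 : Set.Ioc (0:ℝ) (1/2) ⊆ Set.Ioo (0:ℝ) 1 :=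
    fun x hx => ⟨hx.1, lt_of_le_of_lt hx.2 (by norm_num)⟩
  have hsub2 : Set.Ico (1/2 : ℝ) 1 ⊆ Set.Ioo (0:ℝ) 1 :=
    fun x hx => ⟨lt_of_lt_of_le (by norm_num) hx.1, hx.2⟩
  have piece1 : IntegrableOn f (Set.Ioc (0:ℝ) (1/2)) volume := by
    obtain ⟨C, hC⟩ := (isCompact_Icc (a := (0:ℝ)) (b := 1/2)).exists_bound_of_continuousOn
      (f := fun x => (x - a) ^ α * (1 - x) ^ γ * g.eval x)
      (by
        refine ContinuousOn.mul (ContinuousOn.mul ?_ ?_) (Polynomial.continuous g).continuousOn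
        · refine ((continuous_id.sub continuous_const).continuousOn).rpow_const
            (fun x hx => Or.inl ?_)
          intro h; simp only [Pi.sub_apply, id_eq, sub_eq_zero] at h
          have := hx.1; linarith
        · refine ((continuous_const.sub continuous_id).continuousOn).rpow_const
            (fun x hx => Or.inl ?_)
          intro h; simp only [Pi.sub_apply, id_eq, sub_eq_zero] at h
          have := hx.2; linarith)
    apply integrableOn_of_bound measurableSet_Ioc
      ((hconts.mono hsub1).aestronglyMeasurable measurableSet_Ioc)
      (bound := fun x => x ^ β * C)
    · have h1 : IntervalIntegrable (fun x : ℝ => x ^ β) volume 0 (1/2) :=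
        intervalIntegral.intervalIntegrable_rpow' hβ
      exact (intervalIntegrable_iff_integrableOn_Ioc_of_le (by norm_num)).mp (h1.mul_const C)
    · intro x hx
      have hx0 : (0:ℝ) ≤ x := le_of_lt hx.1
      have hxI : x ∈ Set.Icc (0:ℝ) (1/2) := ⟨hx0, hx.2⟩
      have hnn : (0:ℝ) ≤ x ^ β := Real.rpow_nonneg hx0 β
      have hfx : f x = x ^ β * ((x - a) ^ α * (1 - x) ^ γ * g.eval x) := by rw [hf]; ring
      rw [hfx, norm_mul, Real.norm_eq_abs (x ^ β), abs_of_nonneg hnn]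
      exact mul_le_mul_of_nonneg_left (hC x hxI) hnn
  have piece2 : IntegrableOn f (Set.Ico (1/2 : ℝ) 1) volume := by
    obtain ⟨C, hC⟩ := (isCompact_Icc (a := (1/2:ℝ)) (b := 1)).exists_bound_of_continuousOn
      (f := fun x => (x - a) ^ α * x ^ β * g.eval x)
      (by
        refine ContinuousOn.mul (ContinuousOn.mul ?_ ?_) (Polynomial.continuous g).continuousOn
        · refine ((continuous_id.sub continuous_const).continuousOn).rpow_const
            (fun x hx => Or.inl ?_)
          intro h; simp only [Pi.sub_apply, id_eq, sub_eq_zero] at h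
          have := hx.1; linarith
        · refine (continuous_id.continuousOn).rpow_const (fun x hx => Or.inl ?_)
          intro h; simp only [id_eq] at h
          have := hx.1; subst h; norm_num at this)
    apply integrableOn_of_bound measurableSet_Ico
      ((hconts.mono hsub2).aestronglyMeasurable measurableSet_Ico)
      (bound := fun x => (1 - x) ^ γ * C)
    · have h1 : IntervalIntegrable (fun x : ℝ => x ^ γ) volume (1 - 1/2) (1 - 1) :=
        intervalIntegral.intervalIntegrable_rpow' hγ
      have h2 : IntervalIntegrable (fun x : ℝ => (1 - x) ^ γ) volume (1/2) 1 := by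
        have := h1.comp_sub_left 1
        simpa using this
      have h3 := (intervalIntegrable_iff_integrableOn_Icc_of_le (by norm_num)).mp
        (h2.mul_const C)
      exact h3.mono_set Set.Ico_subset_Icc_self
    · intro x hx
      have hx1 : (0:ℝ) ≤ 1 - x := by have := hx.2; linarith
      have hxI : x ∈ Set.Icc (1/2:ℝ) 1 := ⟨hx.1, le_of_lt hx.2⟩
      have hnn : (0:ℝ) ≤ (1-x) ^ γ := Real.rpow_nonneg hx1 γ
      have hfx : f x = (1-x) ^ γ * ((x - a) ^ α * x ^ β * g.eval x) := by rw [hf]; ring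
      rw [hfx, norm_mul, Real.norm_eq_abs ((1-x) ^ γ), abs_of_nonneg hnn]
      exact mul_le_mul_of_nonneg_left (hC x hxI) hnn
  have hcover : Set.Ioo (0:ℝ) 1 ⊆ Set.Ioc (0:ℝ) (1/2) ∪ Set.Ico (1/2:ℝ) 1 := by
    intro x hx
    rcases le_or_gt x (1/2) with h | h
    · exact Or.inl ⟨hx.1, h⟩
    · exact Or.inr ⟨le_of_lt h, hx.2⟩
  exact (piece1.union piece2).mono_set hcover

lemma pearson_right {a α β γ : ℝ} (ha : a < 0) (hα : -1 < α) (hβ : -1 < β) (hγ : -1 < γ)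
    (c : ℕ) (hc : 1 ≤ c) (f : ℝ[X]) :
    ∫ x in Set.Ioo (0:ℝ) 1, (x - a) ^ α * x ^ β * (1 - x) ^ γ *
      ((pip a)^(c-1) * (rp a α β γ (c:ℝ) * f + pip a * f.derivative)).eval x = 0 := by
  obtain ⟨d, rfl⟩ : ∃ d, c = d + 1 := ⟨c - 1, by omega⟩
  set F : ℝ[X] := (pip a)^(d+1-1) * (rp a α β γ ((d+1:ℕ):ℝ) * f + pip a * f.derivative) with hF
  have hca : (0:ℝ) < α+(d+1:ℕ) := by push_cast; linarith
  have hcb : (0:ℝ) < β+(d+1:ℕ) := by push_cast; linarith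
  have hcg : (0:ℝ) < γ+(d+1:ℕ) := by push_cast; linarith
  have hderiv : ∀ x ∈ Set.Ioo (0:ℝ) 1, HasDerivAt (fun x => (x - a) ^ (α+(d+1:ℕ)) *
      (x ^ (β+(d+1:ℕ)) * ((1 - x) ^ (γ+(d+1:ℕ)) * f.eval x)))
      ((x - a) ^ α * x ^ β * (1 - x) ^ γ * F.eval x) x := by
    intro x hx
    have hA : (0:ℝ) < x - a := by have := hx.1; linarith
    have hB : (0:ℝ) < x := hx.1
    have hC : (0:ℝ) < 1 - x := by have := hx.2; linarith
    have h1 : HasDerivAt (fun y : ℝ => (y - a) ^ (α+(d+1:ℕ)))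
        ((α+(d+1:ℕ)) * (x - a) ^ (α+(d+1:ℕ)-1) * 1) x :=
      by have := (Real.hasDerivAt_rpow_const (p := α+(d+1:ℕ)) (Or.inl hA.ne')).comp x
           ((hasDerivAt_id x).sub_const a); exact this
    have h2 : HasDerivAt (fun y : ℝ => y ^ (β+(d+1:ℕ)))
        ((β+(d+1:ℕ)) * x ^ (β+(d+1:ℕ)-1)) x :=
      Real.hasDerivAt_rpow_const (Or.inl hB.ne')
    have h3 : HasDerivAt (fun y : ℝ => (1 - y) ^ (γ+(d+1:ℕ)))
        ((γ+(d+1:ℕ)) * (1 - x) ^ (γ+(d+1:ℕ)-1) * (0 - 1)) x :=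
      (Real.hasDerivAt_rpow_const (Or.inl hC.ne')).comp x
        ((hasDerivAt_const x (1:ℝ)).sub (hasDerivAt_id x))
    have h4 : HasDerivAt (fun y : ℝ => f.eval y) (f.derivative.eval x) x := f.hasDerivAt x
    have hD := h1.mul (h2.mul (h3.mul h4))
    have key : (α+(d+1:ℕ)) * (x - a) ^ (α+(d+1:ℕ)-1) * 1 *
          (x ^ (β+(d+1:ℕ)) * ((1 - x) ^ (γ+(d+1:ℕ)) * f.eval x)) +
        (x - a) ^ (α+(d+1:ℕ)) *
          ((β+(d+1:ℕ)) * x ^ (β+(d+1:ℕ)-1) * ((1 - x) ^ (γ+(d+1:ℕ)) * f.eval x) +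
            x ^ (β+(d+1:ℕ)) * ((γ+(d+1:ℕ)) * (1 - x) ^ (γ+(d+1:ℕ)-1) * (0-1) * f.eval x +
              (1 - x) ^ (γ+(d+1:ℕ)) * f.derivative.eval x))
        = (x - a) ^ α * x ^ β * (1 - x) ^ γ * F.eval x := by
      have eA1 : (x - a) ^ (α+(d+1:ℕ)) = (x - a) ^ α * (x - a) ^ (d+1) := by
        rw [← Real.rpow_natCast (x - a) (d+1), ← Real.rpow_add hA]
      have eA2 : (x - a) ^ (α+(d+1:ℕ)-1) = (x - a) ^ α * (x - a) ^ d := by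
        rw [← Real.rpow_natCast (x - a) d, ← Real.rpow_add hA]
        congr 1
        push_cast; ring
      have eB1 : x ^ (β+(d+1:ℕ)) = x ^ β * x ^ (d+1) := by
        rw [← Real.rpow_natCast x (d+1), ← Real.rpow_add hB]
      have eB2 : x ^ (β+(d+1:ℕ)-1) = x ^ β * x ^ d := by
        rw [← Real.rpow_natCast x d, ← Real.rpow_add hB]
        congr 1; push_cast; ring
      have eC1 : (1 - x) ^ (γ+(d+1:ℕ)) = (1 - x) ^ γ * (1 - x) ^ (d+1) := by
        rw [← Real.rpow_natCast (1 - x) (d+1), ← Real.rpow_add hC]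
      have eC2 : (1 - x) ^ (γ+(d+1:ℕ)-1) = (1 - x) ^ γ * (1 - x) ^ d := by
        rw [← Real.rpow_natCast (1 - x) d, ← Real.rpow_add hC]
        congr 1; push_cast; ring
      rw [eA1, eA2, eB1, eB2, eC1, eC2, hF]
      simp only [eval_mul, eval_add, eval_pow, eval_pip, eval_rp, Nat.add_sub_cancel]
      rw [show ((x - a) * x * (1 - x))^d = (x-a)^d * x^d * (1-x)^d by rw [mul_pow, mul_pow]]
      push_cast
      ring
    exact key ▸ hD
  have hint : IntervalIntegrable
      (fun x => (x - a) ^ α * x ^ β * (1 - x) ^ γ * F.eval x) volume 0 1 :=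
    (intervalIntegrable_iff_integrableOn_Ioo_of_le (by norm_num)).mpr
      (integrableOn_right ha hβ hγ F)
  have t0 : Filter.Tendsto (fun x => (x - a) ^ (α+(d+1:ℕ)) *
      (x ^ (β+(d+1:ℕ)) * ((1 - x) ^ (γ+(d+1:ℕ)) * f.eval x)))
      (nhdsWithin 0 (Set.Ioi 0)) (nhds 0) := by
    have t1 : Filter.Tendsto (fun x : ℝ => (x - a) ^ (α+(d+1:ℕ)))
        (nhdsWithin 0 (Set.Ioi 0)) (nhds ((0 - a) ^ (α+(d+1:ℕ)))) := by
      refine Filter.Tendsto.mono_left ?_ nhdsWithin_le_nhds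
      exact (((continuous_id.sub continuous_const).continuousAt).rpow_const
        (Or.inl (by simp; linarith))).tendsto
    have t2 : Filter.Tendsto (fun x : ℝ => x ^ (β+(d+1:ℕ)))
        (nhdsWithin 0 (Set.Ioi 0)) (nhds 0) := by
      have := ((Real.continuousAt_rpow_const 0 (β+(d+1:ℕ)) (Or.inr hcb.le)).tendsto).mono_left
        (nhdsWithin_le_nhds (a := (0:ℝ)) (s := Set.Ioi 0))
      rw [Real.zero_rpow hcb.ne'] at this
      exact this
    have t3 : Filter.Tendsto (fun x : ℝ => (1 - x) ^ (γ+(d+1:ℕ)))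
        (nhdsWithin 0 (Set.Ioi 0)) (nhds ((1 - 0) ^ (γ+(d+1:ℕ)))) := by
      refine Filter.Tendsto.mono_left ?_ nhdsWithin_le_nhds
      exact ((Real.continuousAt_rpow_const (1 - 0) _ (Or.inl (by norm_num))).comp
        ((continuous_const.sub continuous_id).continuousAt)).tendsto
    have t4 : Filter.Tendsto (fun x : ℝ => f.eval x) (nhdsWithin 0 (Set.Ioi 0))
        (nhds (f.eval 0)) :=
      ((f.continuous).continuousAt).tendsto.mono_left nhdsWithin_le_nhds
    have h := t1.mul (t2.mul (t3.mul t4))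
    simpa only [zero_mul, mul_zero] using h
  have t1' : Filter.Tendsto (fun x => (x - a) ^ (α+(d+1:ℕ)) *
      (x ^ (β+(d+1:ℕ)) * ((1 - x) ^ (γ+(d+1:ℕ)) * f.eval x)))
      (nhdsWithin 1 (Set.Iio 1)) (nhds 0) := by
    have t1 : Filter.Tendsto (fun x : ℝ => (x - a) ^ (α+(d+1:ℕ)))
        (nhdsWithin 1 (Set.Iio 1)) (nhds ((1 - a) ^ (α+(d+1:ℕ)))) := by
      refine Filter.Tendsto.mono_left ?_ nhdsWithin_le_nhds
      exact (((continuous_id.sub continuous_const).continuousAt).rpow_const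
        (Or.inl (by simp; linarith))).tendsto
    have t2 : Filter.Tendsto (fun x : ℝ => x ^ (β+(d+1:ℕ)))
        (nhdsWithin 1 (Set.Iio 1)) (nhds ((1:ℝ) ^ (β+(d+1:ℕ)))) := by
      refine Filter.Tendsto.mono_left ?_ nhdsWithin_le_nhds
      exact ((continuousAt_id).rpow_const (Or.inl (by simp))).tendsto
    have t3 : Filter.Tendsto (fun x : ℝ => (1 - x) ^ (γ+(d+1:ℕ)))
        (nhdsWithin 1 (Set.Iio 1)) (nhds 0) := by
      have h0 : Filter.Tendsto (fun x : ℝ => (1 - x)) (nhdsWithin 1 (Set.Iio 1)) (nhds 0) := by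
        have h1 : Filter.Tendsto (fun x : ℝ => (1 - x)) (nhds 1) (nhds (1 - 1)) :=
          Continuous.tendsto (by continuity) 1
        rw [show (1:ℝ) - 1 = 0 by norm_num] at h1
        exact h1.mono_left nhdsWithin_le_nhds
      have hrc := (Real.continuousAt_rpow_const 0 (γ+(d+1:ℕ)) (Or.inr hcg.le)).tendsto
      have := hrc.comp h0
      rwa [Real.zero_rpow hcg.ne'] at this
    have t4 : Filter.Tendsto (fun x : ℝ => f.eval x) (nhdsWithin 1 (Set.Iio 1))
        (nhds (f.eval 1)) :=
      ((f.continuous).continuousAt).tendsto.mono_left nhdsWithin_le_nhds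
    have h := t1.mul (t2.mul (t3.mul t4))
    simpa only [zero_mul, mul_zero] using h
  have main := intervalIntegral.integral_eq_sub_of_hasDerivAt_of_tendsto
    (by norm_num : (0:ℝ) < 1) hderiv hint t0 t1'
  rw [sub_zero] at main
  rw [← MeasureTheory.integral_Ioc_eq_integral_Ioo,
    ← intervalIntegral.integral_of_le (by norm_num : (0:ℝ) ≤ 1)]
  exact main

lemma pearson_left {a α β γ : ℝ} (ha : a < 0) (hα : -1 < α) (hβ : -1 < β) (hγ : -1 < γ)
    (c : ℕ) (hc : 1 ≤ c) (f : ℝ[X]) :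
    ∫ x in Set.Ioo a 0, (x - a) ^ α * |x| ^ β * (1 - x) ^ γ *
      ((pip a)^(c-1) * (rp a α β γ (c:ℝ) * f + pip a * f.derivative)).eval x = 0 := by
  obtain ⟨d, rfl⟩ : ∃ d, c = d + 1 := ⟨c - 1, by omega⟩
  set F : ℝ[X] := (pip a)^(d+1-1) * (rp a α β γ ((d+1:ℕ):ℝ) * f + pip a * f.derivative) with hF
  have hca : (0:ℝ) < α+(d+1:ℕ) := by push_cast; linarith
  have hcb : (0:ℝ) < β+(d+1:ℕ) := by push_cast; linarith
  have hcg : (0:ℝ) < γ+(d+1:ℕ) := by push_cast; linarith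
  have hderiv : ∀ x ∈ Set.Ioo a 0, HasDerivAt (fun x => (-1:ℝ)^(d+1) * ((x - a) ^ (α+(d+1:ℕ)) *
      ((-x) ^ (β+(d+1:ℕ)) * ((1 - x) ^ (γ+(d+1:ℕ)) * f.eval x))))
      ((x - a) ^ α * |x| ^ β * (1 - x) ^ γ * F.eval x) x := by
    intro x hx
    have hA : (0:ℝ) < x - a := by have := hx.1; linarith
    have hB : (0:ℝ) < -x := by have := hx.2; linarith
    have hC : (0:ℝ) < 1 - x := by have h1 := hx.2; linarith
    have h1 : HasDerivAt (fun y : ℝ => (y - a) ^ (α+(d+1:ℕ)))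
        ((α+(d+1:ℕ)) * (x - a) ^ (α+(d+1:ℕ)-1) * 1) x :=
      by have := (Real.hasDerivAt_rpow_const (p := α+(d+1:ℕ)) (Or.inl hA.ne')).comp x
           ((hasDerivAt_id x).sub_const a); exact this
    have h2 : HasDerivAt (fun y : ℝ => (-y) ^ (β+(d+1:ℕ)))
        ((β+(d+1:ℕ)) * (-x) ^ (β+(d+1:ℕ)-1) * (-1)) x :=
      (Real.hasDerivAt_rpow_const (Or.inl hB.ne')).comp x (hasDerivAt_neg x)
    have h3 : HasDerivAt (fun y : ℝ => (1 - y) ^ (γ+(d+1:ℕ)))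
        ((γ+(d+1:ℕ)) * (1 - x) ^ (γ+(d+1:ℕ)-1) * (0 - 1)) x :=
      (Real.hasDerivAt_rpow_const (Or.inl hC.ne')).comp x
        ((hasDerivAt_const x (1:ℝ)).sub (hasDerivAt_id x))
    have h4 : HasDerivAt (fun y : ℝ => f.eval y) (f.derivative.eval x) x := f.hasDerivAt x
    have hD := (h1.mul (h2.mul (h3.mul h4))).const_mul ((-1:ℝ)^(d+1))
    have key : (-1:ℝ)^(d+1) * ((α+(d+1:ℕ)) * (x - a) ^ (α+(d+1:ℕ)-1) * 1 *
          ((-x) ^ (β+(d+1:ℕ)) * ((1 - x) ^ (γ+(d+1:ℕ)) * f.eval x)) +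
        (x - a) ^ (α+(d+1:ℕ)) *
          ((β+(d+1:ℕ)) * (-x) ^ (β+(d+1:ℕ)-1) * (-1) * ((1 - x) ^ (γ+(d+1:ℕ)) * f.eval x) +
            (-x) ^ (β+(d+1:ℕ)) * ((γ+(d+1:ℕ)) * (1 - x) ^ (γ+(d+1:ℕ)-1) * (0-1) * f.eval x +
              (1 - x) ^ (γ+(d+1:ℕ)) * f.derivative.eval x)))
        = (x - a) ^ α * |x| ^ β * (1 - x) ^ γ * F.eval x := by
      have eA1 : (x - a) ^ (α+(d+1:ℕ)) = (x - a) ^ α * (x - a) ^ (d+1) := by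
        rw [← Real.rpow_natCast (x - a) (d+1), ← Real.rpow_add hA]
      have eA2 : (x - a) ^ (α+(d+1:ℕ)-1) = (x - a) ^ α * (x - a) ^ d := by
        rw [← Real.rpow_natCast (x - a) d, ← Real.rpow_add hA]
        congr 1; push_cast; ring
      have eB1 : (-x) ^ (β+(d+1:ℕ)) = (-x) ^ β * (-x) ^ (d+1) := by
        rw [← Real.rpow_natCast (-x) (d+1), ← Real.rpow_add hB]
      have eB2 : (-x) ^ (β+(d+1:ℕ)-1) = (-x) ^ β * (-x) ^ d := by
        rw [← Real.rpow_natCast (-x) d, ← Real.rpow_add hB]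
        congr 1; push_cast; ring
      have eC1 : (1 - x) ^ (γ+(d+1:ℕ)) = (1 - x) ^ γ * (1 - x) ^ (d+1) := by
        rw [← Real.rpow_natCast (1 - x) (d+1), ← Real.rpow_add hC]
      have eC2 : (1 - x) ^ (γ+(d+1:ℕ)-1) = (1 - x) ^ γ * (1 - x) ^ d := by
        rw [← Real.rpow_natCast (1 - x) d, ← Real.rpow_add hC]
        congr 1; push_cast; ring
      have habs : |x| = -x := abs_of_neg hx.2
      rw [eA1, eA2, eB1, eB2, eC1, eC2, hF, habs]
      simp only [eval_mul, eval_add, eval_pow, eval_pip, eval_rp, Nat.add_sub_cancel]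
      rw [show ((x - a) * x * (1 - x))^d = (x-a)^d * x^d * (1-x)^d by rw [mul_pow, mul_pow]]
      rcases Nat.even_or_odd d with hpar | hpar
      · rw [Even.neg_pow hpar x, Odd.neg_pow (by simpa using hpar.add_one) x,
          Odd.neg_one_pow (by simpa using hpar.add_one)]
        push_cast
        ring
      · rw [Odd.neg_pow hpar x, Even.neg_pow (by simpa using hpar.add_one) x,
          Even.neg_one_pow (by simpa using hpar.add_one)]
        push_cast
        ring
    exact key ▸ hD
  have hint : IntervalIntegrable
      (fun x => (x - a) ^ α * |x| ^ β * (1 - x) ^ γ * F.eval x) volume a 0 :=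
    (intervalIntegrable_iff_integrableOn_Ioo_of_le ha.le).mpr
      (integrableOn_left ha hα hβ F)
  have ta : Filter.Tendsto (fun x => (-1:ℝ)^(d+1) * ((x - a) ^ (α+(d+1:ℕ)) *
      ((-x) ^ (β+(d+1:ℕ)) * ((1 - x) ^ (γ+(d+1:ℕ)) * f.eval x))))
      (nhdsWithin a (Set.Ioi a)) (nhds 0) := by
    have t1 : Filter.Tendsto (fun x : ℝ => (x - a) ^ (α+(d+1:ℕ)))
        (nhdsWithin a (Set.Ioi a)) (nhds 0) := by
      have h0 : Filter.Tendsto (fun x : ℝ => x - a) (nhds a) (nhds (a - a)) :=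
        Continuous.tendsto (by continuity) a
      rw [show a - a = 0 by ring] at h0
      have hrc := (Real.continuousAt_rpow_const 0 (α+(d+1:ℕ)) (Or.inr hca.le)).tendsto
      have := hrc.comp h0
      rw [Real.zero_rpow hca.ne'] at this
      exact this.mono_left nhdsWithin_le_nhds
    have t2 : Filter.Tendsto (fun x : ℝ => (-x) ^ (β+(d+1:ℕ)))
        (nhdsWithin a (Set.Ioi a)) (nhds ((-a) ^ (β+(d+1:ℕ)))) := by
      refine Filter.Tendsto.mono_left ?_ nhdsWithin_le_nhds
      exact ((continuous_neg.continuousAt).rpow_const (Or.inl (by simp; linarith))).tendsto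
    have t3 : Filter.Tendsto (fun x : ℝ => (1 - x) ^ (γ+(d+1:ℕ)))
        (nhdsWithin a (Set.Ioi a)) (nhds ((1 - a) ^ (γ+(d+1:ℕ)))) := by
      refine Filter.Tendsto.mono_left ?_ nhdsWithin_le_nhds
      exact (((continuous_const.sub continuous_id).continuousAt).rpow_const
        (Or.inl (by simp; intro h; linarith))).tendsto
    have t4 : Filter.Tendsto (fun x : ℝ => f.eval x) (nhdsWithin a (Set.Ioi a))
        (nhds (f.eval a)) :=
      ((f.continuous).continuousAt).tendsto.mono_left nhdsWithin_le_nhds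
    have h := (t1.mul (t2.mul (t3.mul t4))).const_mul ((-1:ℝ)^(d+1))
    simpa only [zero_mul, mul_zero] using h
  have t0 : Filter.Tendsto (fun x => (-1:ℝ)^(d+1) * ((x - a) ^ (α+(d+1:ℕ)) *
      ((-x) ^ (β+(d+1:ℕ)) * ((1 - x) ^ (γ+(d+1:ℕ)) * f.eval x))))
      (nhdsWithin 0 (Set.Iio 0)) (nhds 0) := by
    have t1 : Filter.Tendsto (fun x : ℝ => (x - a) ^ (α+(d+1:ℕ)))
        (nhdsWithin 0 (Set.Iio 0)) (nhds ((0 - a) ^ (α+(d+1:ℕ)))) := by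
      refine Filter.Tendsto.mono_left ?_ nhdsWithin_le_nhds
      exact (((continuous_id.sub continuous_const).continuousAt).rpow_const
        (Or.inl (by simp; linarith))).tendsto
    have t2 : Filter.Tendsto (fun x : ℝ => (-x) ^ (β+(d+1:ℕ)))
        (nhdsWithin 0 (Set.Iio 0)) (nhds 0) := by
      have h0 : Filter.Tendsto (fun x : ℝ => -x) (nhds 0) (nhds (-0)) :=
        Continuous.tendsto (by continuity) 0
      rw [show -(0:ℝ) = 0 by ring] at h0
      have hrc := (Real.continuousAt_rpow_const 0 (β+(d+1:ℕ)) (Or.inr hcb.le)).tendsto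
      have := hrc.comp h0
      rw [Real.zero_rpow hcb.ne'] at this
      exact this.mono_left nhdsWithin_le_nhds
    have t3 : Filter.Tendsto (fun x : ℝ => (1 - x) ^ (γ+(d+1:ℕ)))
        (nhdsWithin 0 (Set.Iio 0)) (nhds ((1 - 0) ^ (γ+(d+1:ℕ)))) := by
      refine Filter.Tendsto.mono_left ?_ nhdsWithin_le_nhds
      exact (((continuous_const.sub continuous_id).continuousAt).rpow_const
        (Or.inl (by norm_num))).tendsto
    have t4 : Filter.Tendsto (fun x : ℝ => f.eval x) (nhdsWithin 0 (Set.Iio 0))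
        (nhds (f.eval 0)) :=
      ((f.continuous).continuousAt).tendsto.mono_left nhdsWithin_le_nhds
    have h := (t1.mul (t2.mul (t3.mul t4))).const_mul ((-1:ℝ)^(d+1))
    simpa only [zero_mul, mul_zero] using h
  have main := intervalIntegral.integral_eq_sub_of_hasDerivAt_of_tendsto
    (ha : a < 0) hderiv hint ta t0
  rw [sub_zero] at main
  rw [← MeasureTheory.integral_Ioc_eq_integral_Ioo,
    ← intervalIntegral.integral_of_le ha.le]
  exact main

lemma no_roots_sign {q : ℝ[X]} (hq : q.roots = 0) (hq0 : q ≠ 0) (x y : ℝ) :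
    0 < q.eval x * q.eval y := by
  have hnr : ∀ t : ℝ, q.eval t ≠ 0 := by
    intro t ht
    have : t ∈ q.roots := by
      rw [mem_roots hq0]
      exact ht
    rw [hq] at this
    simpa using this
  rcases lt_or_gt_of_ne (mul_ne_zero (hnr x) (hnr y)) with h | h
  · exfalso
    -- opposite signs: IVT gives a root
    have hcont : ContinuousOn (fun t => q.eval t) (Set.uIcc x y) :=
      (q.continuous).continuousOn
    have h0 : (0:ℝ) ∈ Set.uIcc (q.eval x) (q.eval y) := by
      rcases mul_neg_iff.mp h with ⟨h1, h2⟩ | ⟨h1, h2⟩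
      · exact Set.mem_uIcc.mpr (Or.inr ⟨h2.le, h1.le⟩)
      · exact Set.mem_uIcc.mpr (Or.inl ⟨h1.le, h2.le⟩)
    obtain ⟨t, _, ht⟩ := intermediate_value_uIcc hcont h0
    exact hnr t ht
  · exact h

lemma poly_sign (E : ℝ[X]) (hE : E ≠ 0) (l u : ℝ)
    (heven : ∀ z ∈ Set.Ioo l u, Even (rootMultiplicity z E)) :
    ∀ x ∈ Set.Ioo l u, ∀ y ∈ Set.Ioo l u, 0 ≤ E.eval x * E.eval y := by
  intro x hx y hy
  obtain ⟨q, hfac, _, hq⟩ := E.exists_prod_multiset_X_sub_C_mul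
  have hq0 : q ≠ 0 := by
    intro h
    rw [h, mul_zero] at hfac
    exact hE hfac.symm
  have hevalx : E.eval x = (E.roots.map fun z => x - z).prod * q.eval x := by
    conv_lhs => rw [← hfac]
    rw [eval_mul, eval_multiset_prod]
    simp [Multiset.map_map, Function.comp]
  have hevaly : E.eval y = (E.roots.map fun z => y - z).prod * q.eval y := by
    conv_lhs => rw [← hfac]
    rw [eval_mul, eval_multiset_prod]
    simp [Multiset.map_map, Function.comp]
  have hprod : (E.roots.map fun z => x - z).prod * (E.roots.map fun z => y - z).prod
      = (E.roots.map fun z => (x - z) * (y - z)).prod := by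
    rw [← Multiset.prod_map_mul]
  have hroots_nonneg : 0 ≤ (E.roots.map fun z => (x - z) * (y - z)).prod := by
    rw [Finset.prod_multiset_map_count]
    apply Finset.prod_nonneg
    intro z hz
    rcases Classical.em (z ∈ Set.Ioo l u) with hzin | hzout
    · have : E.roots.count z = rootMultiplicity z E := count_roots E
      rw [this]
      exact (heven z hzin).pow_nonneg _
    · apply pow_nonneg
      rw [Set.mem_Ioo, not_and_or, not_lt, not_lt] at hzout
      rcases hzout with h | h
      · -- z ≤ l : both factors positive
        have h1 : 0 < x - z := by have := hx.1; linarith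
        have h2 : 0 < y - z := by have := hy.1; linarith
        positivity
      · -- u ≤ z : both factors negative
        have h1 : x - z < 0 := by have := hx.2; linarith
        have h2 : y - z < 0 := by have := hy.2; linarith
        exact (mul_pos_of_neg_of_neg h1 h2).le
  calc (0:ℝ) ≤ ((E.roots.map fun z => (x - z) * (y - z)).prod) * (q.eval x * q.eval y) :=
        mul_nonneg hroots_nonneg (no_roots_sign hq hq0 x y).le
    _ = E.eval x * E.eval y := by rw [hevalx, hevaly, ← hprod]; ring

lemma vanish (n : ℕ) (l u : ℝ) (hlu : l < u) (w : ℝ → ℝ)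
    (hw : ∀ x ∈ Set.Ioo l u, 0 < w x)
    (hint : ∀ g : ℝ[X], IntegrableOn (fun x => w x * g.eval x) (Set.Ioo l u) volume)
    (D : ℝ[X]) (hD : D ≠ 0)
    (horth : ∀ k, k < n → ∫ x in Set.Ioo l u, w x * (X^k * D).eval x = 0)
    (hcard : ((D.roots.toFinset.filter
      (fun z => z ∈ Set.Ioo l u ∧ Odd (rootMultiplicity z D))).card) < n) :
    False := by
  classical
  set s : Finset ℝ := D.roots.toFinset.filter
    (fun z => z ∈ Set.Ioo l u ∧ Odd (rootMultiplicity z D)) with hs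
  set q : ℝ[X] := ∏ z ∈ s, (X - C z) with hqdef
  have hqmonic : q.Monic := monic_prod_of_monic _ _ (fun z _ => monic_X_sub_C z)
  have hq0 : q ≠ 0 := hqmonic.ne_zero
  have hqroots : q.roots = s.val := roots_prod_X_sub_C s
  have hqdeg : q.natDegree < n := by
    have : q.natDegree = ∑ z ∈ s, (X - C z).natDegree := natDegree_prod _ _
      (fun z _ => X_sub_C_ne_zero z)
    simp only [natDegree_X_sub_C] at this
    rw [this, Finset.sum_const, smul_eq_mul, mul_one]
    exact hcard
  set E : ℝ[X] := D * q with hE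
  have hE0 : E ≠ 0 := mul_ne_zero hD hq0
  -- rootMultiplicity of q
  have hrmq : ∀ z : ℝ, rootMultiplicity z q = if z ∈ s then 1 else 0 := by
    intro z
    rw [← count_roots, hqroots]
    split_ifs with h
    · exact Multiset.count_eq_one_of_mem s.nodup h
    · exact Multiset.count_eq_zero_of_notMem (by simpa using h)
  -- all roots of E in the interval have even multiplicity
  have heven : ∀ z ∈ Set.Ioo l u, Even (rootMultiplicity z E) := by
    intro z hz
    rw [hE, rootMultiplicity_mul (hE ▸ hE0), hrmq]
    rcases Nat.even_or_odd (rootMultiplicity z D) with hpar | hpar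
    · have : z ∉ s := by
        rw [hs]
        intro h
        exact (Nat.not_odd_iff_even.mpr hpar) (Finset.mem_filter.mp h).2.2
      rw [if_neg this, add_zero]
      exact hpar
    · have : z ∈ s := by
        rw [hs]
        refine Finset.mem_filter.mpr ⟨?_, hz, hpar⟩
        rw [Multiset.mem_toFinset, mem_roots hD]
        exact (rootMultiplicity_pos hD).mp (Nat.pos_of_ne_zero (by
          intro h; rw [h] at hpar; simpa using hpar))
      rw [if_pos this]
      exact hpar.add_one
  have hsign := poly_sign E hE0 l u heven
  -- the integral of w * E over the interval is 0
  have hqsum : q = ∑ k ∈ Finset.range n, C (q.coeff k) * X^k := by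
    conv_lhs => rw [q.as_sum_range' n hqdeg]
    exact Finset.sum_congr rfl (fun k _ => by rw [C_mul_X_pow_eq_monomial])
  have hL : ∫ x in Set.Ioo l u, w x * E.eval x = 0 := by
    have hfun : (fun x => w x * E.eval x)
        = fun x => ∑ k ∈ Finset.range n, q.coeff k * (w x * (X^k * D).eval x) := by
      funext x
      rw [hE]
      conv_lhs => rw [hqsum]
      simp only [eval_mul, eval_finset_sum, eval_C, eval_pow, eval_X, Finset.mul_sum,
        Finset.sum_mul]
      apply Finset.sum_congr rfl
      intro k _
      ring
    rw [hfun, integral_finset_sum]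
    · apply Finset.sum_eq_zero
      intro k hk
      rw [integral_const_mul, horth k (Finset.mem_range.mp hk)]
      ring
    · intro k _
      exact (hint (X^k * D)).const_mul _
  -- pick a non-root point
  have hinf : (Set.Ioo l u).Infinite := Set.Ioo_infinite hlu
  have hfin : {x : ℝ | E.IsRoot x}.Finite := finite_setOf_isRoot hE0
  obtain ⟨x₀, hx₀⟩ := (hinf.diff hfin).nonempty
  have hx₀I : x₀ ∈ Set.Ioo l u := hx₀.1
  have hx₀E : E.eval x₀ ≠ 0 := hx₀.2
  -- nonnegative integrand with zero integral
  set f : ℝ → ℝ := fun x => w x * E.eval x * E.eval x₀ with hf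
  have hnn : 0 ≤ᵐ[volume.restrict (Set.Ioo l u)] f := by
    have goal : ∀ᵐ x ∂(volume.restrict (Set.Ioo l u)), 0 ≤ f x := by
      rw [ae_restrict_iff' measurableSet_Ioo]
      refine Filter.Eventually.of_forall (fun x hx => ?_)
      rw [hf]
      have h1 := hsign x hx x₀ hx₀I
      have h2 := (hw x hx).le
      calc (0:ℝ) ≤ w x * (E.eval x * E.eval x₀) := mul_nonneg h2 h1
        _ = w x * E.eval x * E.eval x₀ := by ring
    exact goal
  have hfi : Integrable f (volume.restrict (Set.Ioo l u)) := by
    have := (hint E).mul_const (E.eval x₀)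
    exact this
  have hfz : ∫ x in Set.Ioo l u, f x = 0 := by
    rw [hf]
    simp only
    rw [integral_mul_const, hL, zero_mul]
  have haez : f =ᵐ[volume.restrict (Set.Ioo l u)] 0 :=
    (integral_eq_zero_iff_of_nonneg_ae hnn hfi).mp hfz
  -- hence E vanishes a.e. on the interval: contradiction with finiteness of roots
  have haem : ∀ᵐ x ∂(volume : Measure ℝ), x ∈ Set.Ioo l u → f x = 0 :=
    (ae_restrict_iff' measurableSet_Ioo).mp haez
  set T : Set ℝ := Set.Ioo l u \ {x : ℝ | E.IsRoot x} with hT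
  have hTnull : ∀ᵐ x ∂(volume : Measure ℝ), x ∉ T := by
    filter_upwards [haem] with x hx
    intro hxT
    have h0 : f x = 0 := hx hxT.1
    rw [hf] at h0
    have hwx := (hw x hxT.1).ne'
    have hEx : E.eval x ≠ 0 := hxT.2
    have := mul_ne_zero (mul_ne_zero hwx hEx) hx₀E
    exact this h0
  have hT0 : volume T = 0 := measure_eq_zero_iff_ae_notMem.mpr hTnull
  have hT1 : volume T = volume (Set.Ioo l u) :=
    measure_diff_null (hfin.measure_zero _)
  rw [hT1, Real.volume_Ioo] at hT0
  have : (0:ℝ) < u - l := sub_pos.mpr hlu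
  simp only [ENNReal.ofReal_eq_zero, not_lt] at hT0
  linarith


end JA

open JA in
/-- **Subleading coefficient of the diagonal Jacobi-Angelesco polynomial** `P_{n,n}`:
the coefficient of `x^{2n-1}` equals `-n[α+β+2n + a(β+γ+2n)]/(α+β+γ+3n)`. -/
theorem stmt_15 (a : ℝ) (ha : a < 0) (α β γ : ℝ)
    (hα : -1 < α) (hβ : -1 < β) (hγ : -1 < γ) (n : ℕ) (hn : 1 ≤ n)
    (P : Polynomial ℝ)
    (hPm : P.Monic) (hPdeg : P.natDegree = 2 * n)
    (hPorth1 : ∀ k < n,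
      ∫ x in Set.Ioo a 0,
        P.eval x * ((x - a) ^ α * |x| ^ β * (1 - x) ^ γ) * x ^ k = 0)
    (hPorth2 : ∀ k < n,
      ∫ x in Set.Ioo (0:ℝ) 1,
        P.eval x * ((x - a) ^ α * x ^ β * (1 - x) ^ γ) * x ^ k = 0) :
    P.coeff (2 * n - 1) =
      -(n : ℝ) * (α + β + 2 * n + a * (β + γ + 2 * n)) / (α + β + γ + 3 * n) := by
  classical
  set K : ℝ := α + β + γ + 3 * n with hK
  set T : ℝ := α + β + 2 * n + a * (β + γ + 2 * n) with hT
  have hKm : ∀ m : ℕ, m < n → K - m ≠ 0 := by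
    intro m hm
    have h1 : (m:ℝ) ≤ (n:ℝ) - 1 := by
      have : (m:ℝ) + 1 ≤ n := by exact_mod_cast hm
      linarith
    have h2 : (1:ℝ) ≤ n := by exact_mod_cast hn
    have : (0:ℝ) < K - m := by rw [hK]; nlinarith
    linarith
  have hK0 : K ≠ 0 := by
    have h2 : (1:ℝ) ≤ n := by exact_mod_cast hn
    have : (0:ℝ) < K := by rw [hK]; nlinarith
    linarith
  set Q : ℝ[X] := G a α β γ n n with hQ
  obtain ⟨hQtop, hQsub⟩ := G_coeff_invariant a α β γ n n hn le_rfl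
  set Λ : ℝ := lam K n with hΛ
  have hΛ0 : Λ ≠ 0 := lam_ne_zero K n hKm
  have hQsub' : Q.coeff (2*n-1) = -(n:ℝ) * T / K * Λ := by
    rw [← hQ] at hQsub
    rw [hQsub, sig_eq K T hK0 n]
  -- the two linear functionals
  set w₁ : ℝ → ℝ := fun x => (x - a) ^ α * |x| ^ β * (1 - x) ^ γ with hw₁
  set w₂ : ℝ → ℝ := fun x => (x - a) ^ α * x ^ β * (1 - x) ^ γ with hw₂
  set L₁ : ℝ[X] → ℝ := fun g => ∫ x in Set.Ioo a 0, w₁ x * g.eval x with hL₁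
  set L₂ : ℝ[X] → ℝ := fun g => ∫ x in Set.Ioo (0:ℝ) 1, w₂ x * g.eval x with hL₂
  have hint₁ : ∀ g : ℝ[X], IntegrableOn (fun x => w₁ x * g.eval x) (Set.Ioo a 0) volume :=
    fun g => integrableOn_left ha hα hβ g
  have hint₂ : ∀ g : ℝ[X], IntegrableOn (fun x => w₂ x * g.eval x)
      (Set.Ioo (0:ℝ) 1) volume := fun g => integrableOn_right ha hβ hγ g
  have hadd₁ : ∀ p q : ℝ[X], L₁ (p + q) = L₁ p + L₁ q := by
    intro p q
    rw [hL₁]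
    simp only
    rw [show (fun x => w₁ x * (p+q).eval x) = fun x => w₁ x * p.eval x + w₁ x * q.eval x by
      funext x; rw [eval_add]; ring]
    exact integral_add (hint₁ p) (hint₁ q)
  have hadd₂ : ∀ p q : ℝ[X], L₂ (p + q) = L₂ p + L₂ q := by
    intro p q
    rw [hL₂]
    simp only
    rw [show (fun x => w₂ x * (p+q).eval x) = fun x => w₂ x * p.eval x + w₂ x * q.eval x by
      funext x; rw [eval_add]; ring]
    exact integral_add (hint₂ p) (hint₂ q)
  have hsmul₁ : ∀ (r : ℝ) (p : ℝ[X]), L₁ (C r * p) = r * L₁ p := by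
    intro r p
    rw [hL₁]
    simp only
    rw [show (fun x => w₁ x * (C r * p).eval x) = fun x => r * (w₁ x * p.eval x) by
      funext x; rw [eval_mul, eval_C]; ring]
    exact integral_const_mul r _
  have hsmul₂ : ∀ (r : ℝ) (p : ℝ[X]), L₂ (C r * p) = r * L₂ p := by
    intro r p
    rw [hL₂]
    simp only
    rw [show (fun x => w₂ x * (C r * p).eval x) = fun x => r * (w₂ x * p.eval x) by
      funext x; rw [eval_mul, eval_C]; ring]
    exact integral_const_mul r _
  -- orthogonality of Q
  have hQorth₁ : ∀ k, k < n → L₁ (X^k * Q) = 0 := by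
    intro k hk
    have h := ortho_induction a α β γ n L₁ hadd₁ hsmul₁
      (fun c hc f => pearson_left ha hα hβ hγ c hc f) n le_rfl k hk
    rwa [Nat.sub_self, pow_zero, one_mul] at h
  have hQorth₂ : ∀ k, k < n → L₂ (X^k * Q) = 0 := by
    intro k hk
    have h := ortho_induction a α β γ n L₂ hadd₂ hsmul₂
      (fun c hc f => pearson_right ha hα hβ hγ c hc f) n le_rfl k hk
    rwa [Nat.sub_self, pow_zero, one_mul] at h
  -- orthogonality of P
  have hPorth₁' : ∀ k, k < n → L₁ (X^k * P) = 0 := by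
    intro k hk
    rw [hL₁]
    simp only
    refine Eq.trans (integral_congr_ae (Filter.Eventually.of_forall (fun x => ?_)))
      (hPorth1 k hk)
    simp only [hw₁, eval_mul, eval_pow, eval_X]
    ring
  have hPorth₂' : ∀ k, k < n → L₂ (X^k * P) = 0 := by
    intro k hk
    rw [hL₂]
    simp only
    refine Eq.trans (integral_congr_ae (Filter.Eventually.of_forall (fun x => ?_)))
      (hPorth2 k hk)
    simp only [hw₂, eval_mul, eval_pow, eval_X]
    ring
  -- the difference polynomial
  set D : ℝ[X] := C Λ * P - Q with hD
  have hPtop : P.coeff (2*n) = 1 := by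
    have := hPm.leadingCoeff
    rwa [leadingCoeff, hPdeg] at this
  have hDtop : D.coeff (2*n) = 0 := by
    rw [hD, hQ, coeff_sub, coeff_C_mul, hPtop, hQtop]
    ring
  have hDdeg2n : D.natDegree ≤ 2*n := by
    rw [hD]
    refine le_trans (natDegree_sub_le _ _) (max_le ?_ ?_)
    · refine le_trans (natDegree_mul_le) ?_
      simp [hPdeg]
    · rw [hQ]; exact natDegree_G_le a α β γ n n
  have hDdeg : D.natDegree ≤ 2*n - 1 := by
    refine natDegree_le_iff_coeff_eq_zero.mpr (fun m hm => ?_)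
    rcases Nat.lt_or_ge (2*n) m with h | h
    · exact coeff_eq_zero_of_natDegree_lt (lt_of_le_of_lt hDdeg2n h)
    · have : m = 2*n := by omega
      rw [this]
      exact hDtop
  have hDorth₁ : ∀ k, k < n → L₁ (X^k * D) = 0 := by
    intro k hk
    have hsplit : X^k * D = C Λ * (X^k * P) + C (-1) * (X^k * Q) := by
      rw [hD]; simp only [map_neg, map_one]; ring
    rw [hsplit, hadd₁, hsmul₁, hsmul₁, hPorth₁' k hk, hQorth₁ k hk]
    ring
  have hDorth₂ : ∀ k, k < n → L₂ (X^k * D) = 0 := by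
    intro k hk
    have hsplit : X^k * D = C Λ * (X^k * P) + C (-1) * (X^k * Q) := by
      rw [hD]; simp only [map_neg, map_one]; ring
    rw [hsplit, hadd₂, hsmul₂, hsmul₂, hPorth₂' k hk, hQorth₂ k hk]
    ring
  -- D = 0 by the sign-change argument
  have hDzero : D = 0 := by
    by_contra hD0
    set s₁ : Finset ℝ := D.roots.toFinset.filter
      (fun z => z ∈ Set.Ioo a 0 ∧ Odd (rootMultiplicity z D)) with hs₁
    set s₂ : Finset ℝ := D.roots.toFinset.filter
      (fun z => z ∈ Set.Ioo (0:ℝ) 1 ∧ Odd (rootMultiplicity z D)) with hs₂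
    have hw₁pos : ∀ x ∈ Set.Ioo a 0, 0 < w₁ x := by
      intro x hx
      rw [hw₁]
      have h1 : (0:ℝ) < x - a := by have := hx.1; linarith
      have h2 : (0:ℝ) < |x| := abs_pos.mpr (ne_of_lt hx.2)
      have h3 : (0:ℝ) < 1 - x := by have := hx.2; linarith
      positivity
    have hw₂pos : ∀ x ∈ Set.Ioo (0:ℝ) 1, 0 < w₂ x := by
      intro x hx
      rw [hw₂]
      have h1 : (0:ℝ) < x - a := by have := hx.1; linarith
      have h2 : (0:ℝ) < x := hx.1
      have h3 : (0:ℝ) < 1 - x := by have := hx.2; linarith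
      positivity
    rcases Nat.lt_or_ge s₁.card n with hc₁ | hc₁
    · exact vanish n a 0 ha w₁ hw₁pos hint₁ D hD0 hDorth₁ hc₁
    rcases Nat.lt_or_ge s₂.card n with hc₂ | hc₂
    · exact vanish n 0 1 (by norm_num) w₂ hw₂pos hint₂ D hD0 hDorth₂ hc₂
    -- too many roots
    have hdisj : Disjoint s₁ s₂ := by
      rw [Finset.disjoint_left]
      intro z hz₁ hz₂
      have h1 := (Finset.mem_filter.mp hz₁).2.1.2
      have h2 := (Finset.mem_filter.mp hz₂).2.1.1
      linarith
    have hsub : s₁ ∪ s₂ ⊆ D.roots.toFinset := by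
      intro z hz
      rcases Finset.mem_union.mp hz with h | h
      · exact (Finset.mem_filter.mp h).1
      · exact (Finset.mem_filter.mp h).1
    have hcardle : (s₁ ∪ s₂).card ≤ D.roots.toFinset.card := Finset.card_le_card hsub
    rw [Finset.card_union_of_disjoint hdisj] at hcardle
    have h1 : D.roots.toFinset.card ≤ Multiset.card D.roots := Multiset.toFinset_card_le _
    have h2 : Multiset.card D.roots ≤ D.natDegree := card_roots' D
    omega
  -- conclude
  have hfinal : C Λ * P = Q := by
    have := sub_eq_zero.mp hDzero
    exact this
  have hcoeff : Λ * P.coeff (2*n-1) = Q.coeff (2*n-1) := by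
    rw [← hfinal, coeff_C_mul]
  rw [hQsub'] at hcoeff
  have hPc : P.coeff (2*n-1) = -(n:ℝ) * T / K := by
    refine mul_left_cancel₀ hΛ0 ?_
    rw [hcoeff]
    ring
  exact hPc
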